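/- Let p be the mesh pattern (12, {(0,0),(0,1),(1,1),(1,2),(2,0),(2,2)}). For every n ≥ 1, the number of permutations of length n avoiding p equals n! − Σ_{k=0}^{n−2} Σ_{j=0}^{k} j!·(k−j)!·(n−2−k)!. -/

import Mathlib

/-- 1-based position boundaries of an occurrence: `posOf x 0 = 0`,
`posOf x i = x_i` (1-based) for `1 ≤ i ≤ k`, and `posOf x i = n+1` for `i > k`. -/
def posOf {k n : ℕ} (x : Fin k → Fin n) (i : ℕ) : ℕ :=
  if h : 1 ≤ i ∧ i ≤ k then (x ⟨i - 1, by omega⟩ : ℕ) + 1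
  else if i = 0 then 0 else n + 1

/-- 1-based value boundaries of an occurrence: `valOf τ x π 0 = 0`,
`valOf τ x π j = y_j`, the `j`-th smallest of the values `π(x_1),…,π(x_k)`
(which equals `π(x_{τ⁻¹(j)})` for an occurrence of the classical pattern `τ`),
and `n+1` for `j > k`. -/
def valOf {k n : ℕ} (τ : Equiv.Perm (Fin k)) (x : Fin k → Fin n)
    (π : Equiv.Perm (Fin n)) (j : ℕ) : ℕ :=
  if h : 1 ≤ j ∧ j ≤ k then (π (x (τ.symm ⟨j - 1, by omega⟩)) : ℕ) + 1
  else if j = 0 then 0 else n + 1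

/-- `π` (a permutation of length `n`, 0-indexed via `Fin n`) contains the mesh
pattern `(τ, R)`, where boxes in `R` are given with 0-based coordinates in `[0,k]²`.
All positions/values are converted to 1-based via `+1`. -/
def MeshOccursIn {k n : ℕ} (τ : Equiv.Perm (Fin k)) (R : Set (ℕ × ℕ))
    (π : Equiv.Perm (Fin n)) : Prop :=
  ∃ x : Fin k → Fin n, StrictMono x ∧
    (∀ a b : Fin k, π (x a) < π (x b) ↔ τ a < τ b) ∧
    ∀ r ∈ R, ∀ z : Fin n,
      ¬ (posOf x r.1 < (z : ℕ) + 1 ∧ (z : ℕ) + 1 < posOf x (r.1 + 1) ∧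
         valOf τ x π r.2 < (π z : ℕ) + 1 ∧ (π z : ℕ) + 1 < valOf τ x π (r.2 + 1))

/-- `π` avoids the mesh pattern `(τ, R)`. -/
def MeshAvoids {k n : ℕ} (τ : Equiv.Perm (Fin k)) (R : Set (ℕ × ℕ))
    (π : Equiv.Perm (Fin n)) : Prop := ¬ MeshOccursIn τ R π

-- test chunk 1
section
variable {n : ℕ}

lemma posOf0 (x : Fin 2 → Fin n) : posOf x 0 = 0 := by simp [posOf]
lemma posOf1 (x : Fin 2 → Fin n) : posOf x 1 = (x 0 : ℕ) + 1 := by simp [posOf]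
lemma posOf2 (x : Fin 2 → Fin n) : posOf x 2 = (x 1 : ℕ) + 1 := by simp [posOf]
lemma posOf3 (x : Fin 2 → Fin n) : posOf x 3 = n + 1 := by simp [posOf]
lemma valOf0 (x : Fin 2 → Fin n) (π : Equiv.Perm (Fin n)) : valOf 1 x π 0 = 0 := by simp [valOf]
lemma valOf1 (x : Fin 2 → Fin n) (π : Equiv.Perm (Fin n)) : valOf 1 x π 1 = (π (x 0) : ℕ) + 1 := by
  simp [valOf]; rfl
lemma valOf2 (x : Fin 2 → Fin n) (π : Equiv.Perm (Fin n)) : valOf 1 x π 2 = (π (x 1) : ℕ) + 1 := by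
  simp [valOf]; rfl
lemma valOf3 (x : Fin 2 → Fin n) (π : Equiv.Perm (Fin n)) : valOf 1 x π 3 = n + 1 := by simp [valOf]

end

section
variable {n : ℕ}

def R6 : Set (ℕ × ℕ) := {(0,0),(0,1),(1,1),(1,2),(2,0),(2,2)}

lemma occ_iff (π : Equiv.Perm (Fin n)) :
    MeshOccursIn (1 : Equiv.Perm (Fin 2)) R6 π ↔
      ∃ a b : Fin n, (a : ℕ) < b ∧ (π a : ℕ) < π b ∧
        (∀ z : Fin n, (z : ℕ) < a → (π b : ℕ) < π z) ∧
        (∀ z : Fin n, (a : ℕ) < z → (z : ℕ) < b → (π z : ℕ) < π a) ∧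
        (∀ z : Fin n, (b : ℕ) < z → (π a : ℕ) < π z ∧ (π z : ℕ) < π b) := by
  constructor
  · rintro ⟨x, hmono, hpat, hbox⟩
    refine ⟨x 0, x 1, ?_, ?_, ?_, ?_, ?_⟩
    · exact hmono (by decide : (0 : Fin 2) < 1)
    · exact (hpat 0 1).2 (by decide)
    · intro z hz
      have h00 := hbox (0,0) (by simp [R6]) z
      have h01 := hbox (0,1) (by simp [R6]) z
      simp only [Nat.reduceAdd, posOf0, posOf1, valOf0, valOf1, valOf2] at h00 h01
      have hza : z ≠ x 0 := by intro h; subst h; omega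
      have hzb : z ≠ x 1 := by
        intro h; subst h
        have := hmono (by decide : (0 : Fin 2) < 1); omega
      have h1 : (π z : ℕ) ≠ π (x 0) := by
        simp [Fin.val_eq_val, EmbeddingLike.apply_eq_iff_eq, hza]
      have h2 : (π z : ℕ) ≠ π (x 1) := by
        simp [Fin.val_eq_val, EmbeddingLike.apply_eq_iff_eq, hzb]
      omega
    · intro z h1 h2
      have h11 := hbox (1,1) (by simp [R6]) z
      have h12 := hbox (1,2) (by simp [R6]) z
      simp only [Nat.reduceAdd, posOf1, posOf2, valOf1, valOf2, valOf3] at h11 h12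
      have hza : z ≠ x 0 := by intro h; subst h; omega
      have hzb : z ≠ x 1 := by intro h; subst h; omega
      have e1 : (π z : ℕ) ≠ π (x 0) := by
        simp [Fin.val_eq_val, EmbeddingLike.apply_eq_iff_eq, hza]
      have e2 : (π z : ℕ) ≠ π (x 1) := by
        simp [Fin.val_eq_val, EmbeddingLike.apply_eq_iff_eq, hzb]
      have := z.isLt
      have := (π z).isLt
      omega
    · intro z hz
      have h20 := hbox (2,0) (by simp [R6]) z
      have h22 := hbox (2,2) (by simp [R6]) z
      simp only [Nat.reduceAdd, posOf2, posOf3, valOf0, valOf1, valOf2, valOf3] at h20 h22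
      have hza : z ≠ x 0 := by
        intro h; subst h
        have := hmono (by decide : (0 : Fin 2) < 1); omega
      have hzb : z ≠ x 1 := by intro h; subst h; omega
      have e1 : (π z : ℕ) ≠ π (x 0) := by
        simp [Fin.val_eq_val, EmbeddingLike.apply_eq_iff_eq, hza]
      have e2 : (π z : ℕ) ≠ π (x 1) := by
        simp [Fin.val_eq_val, EmbeddingLike.apply_eq_iff_eq, hzb]
      have := z.isLt
      have := (π z).isLt
      omega
  · rintro ⟨a, b, hab, hv, H1, H2, H3⟩
    refine ⟨![a, b], ?_, ?_, ?_⟩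
    · intro i j hij
      fin_cases i <;> fin_cases j <;>
          simp only [Fin.mk_lt_mk, Matrix.cons_val_zero, Matrix.cons_val_one,
            Matrix.head_cons, Fin.lt_def, Fin.mk_zero, Fin.mk_one, Fin.val_zero, Fin.val_one] at hij ⊢ <;> omega
    · intro i j
      fin_cases i <;> fin_cases j <;>
        simp only [Equiv.Perm.coe_one, id_eq, Matrix.cons_val_zero, Matrix.cons_val_one,
          Matrix.head_cons, Fin.lt_def, Fin.mk_zero, Fin.mk_one, Fin.mk_lt_mk, Fin.val_zero, Fin.val_one] <;> omega
    · rintro ⟨r1, r2⟩ hr z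
      have hM0 : (![a,b] : Fin 2 → Fin n) 0 = a := rfl
      have hM1 : (![a,b] : Fin 2 → Fin n) 1 = b := rfl
      simp only [R6, Set.mem_insert_iff, Set.mem_singleton_iff, Prod.mk.injEq] at hr
      have hza := fun h : z = a => h ▸ (rfl : π z = π z)
      rcases hr with ⟨e1,e2⟩|⟨e1,e2⟩|⟨e1,e2⟩|⟨e1,e2⟩|⟨e1,e2⟩|⟨e1,e2⟩ <;> subst e1 <;> subst e2 <;>
        simp only [Nat.reduceAdd, posOf0, posOf1, posOf2, posOf3, valOf0, valOf1, valOf2, valOf3, hM0, hM1] <;>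
        push_neg <;> intro hc1 hc2
      · intro _; by_contra hc4
        have := H1 z (by omega)
        omega
      · intro hc3; by_contra hc4
        have := H1 z (by omega)
        omega
      · intro hc3; by_contra hc4
        have := H2 z (by omega) (by omega)
        omega
      · intro hc3; by_contra hc4
        have := H2 z (by omega) (by omega)
        omega
      · intro _; by_contra hc4
        have := (H3 z (by omega)).1
        omega
      · intro hc3; by_contra hc4
        have := (H3 z (by omega)).2
        omega

end

section
variable {n : ℕ}

def Struct (A B C : ℕ) (π : Equiv.Perm (Fin n)) : Prop :=
  A + B + C + 2 = n ∧
  ∀ i : Fin n,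
    ((i : ℕ) < A → B + C + 1 < (π i : ℕ)) ∧
    ((i : ℕ) = A → (π i : ℕ) = B) ∧
    (A < (i : ℕ) → (i : ℕ) < A + B + 1 → (π i : ℕ) < B) ∧
    ((i : ℕ) = A + B + 1 → (π i : ℕ) = B + C + 1) ∧
    (A + B + 1 < (i : ℕ) → B < (π i : ℕ) ∧ (π i : ℕ) < B + C + 1)

lemma occ_iff_struct (π : Equiv.Perm (Fin n)) :
    MeshOccursIn (1 : Equiv.Perm (Fin 2)) R6 π ↔ ∃ B C, Struct (n - 2 - B - C) B C π := by
  rw [occ_iff]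
  constructor
  · rintro ⟨a, b, hab, hv, H1, H2, H3⟩
    have himg1 : Finset.image π (Finset.Iio a) = Finset.Ioi (π b) := by
      ext y
      simp only [Finset.mem_image, Finset.mem_Iio, Finset.mem_Ioi]
      constructor
      · rintro ⟨z, hz, rfl⟩
        exact Fin.lt_def.2 (H1 z (Fin.lt_def.1 hz))
      · intro hy
        refine ⟨π.symm y, ?_, π.apply_symm_apply y⟩
        have hpy : (π (π.symm y) : ℕ) = y := by rw [π.apply_symm_apply]
        set i := π.symm y with hi
        rw [Fin.lt_def] at hy ⊢
        rcases Nat.lt_trichotomy (i : ℕ) (a : ℕ) with h' | h' | h'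
        · exact h'
        · exfalso
          have hia : i = a := Fin.ext h'
          rw [hia] at hpy; omega
        · exfalso
          rcases Nat.lt_trichotomy (i : ℕ) (b : ℕ) with h'' | h'' | h''
          · have := H2 i h' h''; omega
          · have hib : i = b := Fin.ext h''
            rw [hib] at hpy; omega
          · have := (H3 i h'').2; omega
    have hc1 : (a : ℕ) + (π b : ℕ) + 1 = n := by
      have := congrArg Finset.card himg1
      rw [Finset.card_image_of_injective _ π.injective, Fin.card_Iio, Fin.card_Ioi] at this
      have := (π b).isLt
      have := a.isLt
      omega
    have himg2 : Finset.image π (Finset.Ioo a b) = Finset.Iio (π a) := by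
      ext y
      simp only [Finset.mem_image, Finset.mem_Ioo, Finset.mem_Iio]
      constructor
      · rintro ⟨z, ⟨hz1, hz2⟩, rfl⟩
        exact Fin.lt_def.2 (H2 z (Fin.lt_def.1 hz1) (Fin.lt_def.1 hz2))
      · intro hy
        refine ⟨π.symm y, ⟨?_, ?_⟩, π.apply_symm_apply y⟩ <;> rw [Fin.lt_def]
        all_goals {
          have hpy : (π (π.symm y) : ℕ) = y := by rw [π.apply_symm_apply]
          set i := π.symm y with hidef
          rw [Fin.lt_def] at hy
          have key : (a : ℕ) < i ∧ (i : ℕ) < b := by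
            rcases Nat.lt_trichotomy (i : ℕ) (a : ℕ) with h' | h' | h'
            · exfalso; have := H1 i h'; omega
            · exfalso
              have hia : i = a := Fin.ext h'
              rw [hia] at hpy; omega
            · rcases Nat.lt_trichotomy (i : ℕ) (b : ℕ) with h'' | h'' | h''
              · exact ⟨h', h''⟩
              · exfalso
                have hib : i = b := Fin.ext h''
                rw [hib] at hpy; omega
              · exfalso; have := (H3 i h'').1; omega
          first | exact key.1 | exact key.2
        }
    have hc2 : (b : ℕ) = a + (π a : ℕ) + 1 := by
      have := congrArg Finset.card himg2
      rw [Finset.card_image_of_injective _ π.injective, Fin.card_Ioo, Fin.card_Iio] at this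
      omega
    refine ⟨(π a : ℕ), (π b : ℕ) - (π a : ℕ) - 1, ?_, ?_⟩
    · omega
    intro i
    have hbv := b.isLt
    refine ⟨?_, ?_, ?_, ?_, ?_⟩
    · intro h; have := H1 i (by omega); omega
    · intro h
      have : i = a := Fin.ext (by omega)
      subst this; rfl
    · intro h1 h2; have := H2 i (by omega) (by omega); omega
    · intro h
      have : i = b := Fin.ext (by omega)
      subst this; omega
    · intro h; have := H3 i (by omega); omega
  · rintro ⟨B, C, hsum, hstr⟩
    set A := n - 2 - B - C with hA
    have h1 := (hstr ⟨A, by omega⟩).2.1 rfl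
    have h2 := (hstr ⟨A + B + 1, by omega⟩).2.2.2.1 rfl
    refine ⟨⟨A, by omega⟩, ⟨A + B + 1, by omega⟩, by simp, by omega, ?_, ?_, ?_⟩
    · intro z hz
      have := (hstr z).1 hz
      omega
    · intro z hz1 hz2
      have := (hstr z).2.2.1 hz1 hz2
      omega
    · intro z hz
      have := (hstr z).2.2.2.2 hz
      omega

end

section Count
variable {n A B C : ℕ}

/-- forward function on ℕ -/
def ff (A B C : ℕ) (σ1 : Equiv.Perm (Fin A)) (σ2 : Equiv.Perm (Fin B))
    (σ3 : Equiv.Perm (Fin C)) (m : ℕ) : ℕ :=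
  if h1 : m < A then (σ1 ⟨m, h1⟩ : ℕ) + B + C + 2
  else if m = A then B
  else if h3 : m - A - 1 < B ∧ A < m then (σ2 ⟨m - A - 1, h3.1⟩ : ℕ)
  else if m = A + B + 1 then B + C + 1
  else if h5 : m - A - B - 2 < C ∧ A + B + 1 < m then B + 1 + (σ3 ⟨m - A - B - 2, h5.1⟩ : ℕ)
  else 0

def gg (A B C : ℕ) (σ1 : Equiv.Perm (Fin A)) (σ2 : Equiv.Perm (Fin B))
    (σ3 : Equiv.Perm (Fin C)) (m : ℕ) : ℕ :=
  if h1 : m < B then A + 1 + (σ2.symm ⟨m, h1⟩ : ℕ)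
  else if m = B then A
  else if h3 : m - B - 1 < C ∧ B < m then A + B + 2 + (σ3.symm ⟨m - B - 1, h3.1⟩ : ℕ)
  else if m = B + C + 1 then A + B + 1
  else if h5 : m - B - C - 2 < A ∧ B + C + 1 < m then (σ1.symm ⟨m - B - C - 2, h5.1⟩ : ℕ)
  else 0

lemma ff_lt (h : A + B + C + 2 = n) (σ1 : Equiv.Perm (Fin A)) (σ2 : Equiv.Perm (Fin B))
    (σ3 : Equiv.Perm (Fin C)) {m : ℕ} (hm : m < n) : ff A B C σ1 σ2 σ3 m < n := by
  unfold ff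
  split_ifs with h1 h2 h3 h4 h5
  · have := (σ1 ⟨m, h1⟩).isLt; omega
  · omega
  · have := (σ2 ⟨m - A - 1, h3.1⟩).isLt; omega
  · omega
  · have := (σ3 ⟨m - A - B - 2, h5.1⟩).isLt; omega
  · omega

lemma gg_lt (h : A + B + C + 2 = n) (σ1 : Equiv.Perm (Fin A)) (σ2 : Equiv.Perm (Fin B))
    (σ3 : Equiv.Perm (Fin C)) {m : ℕ} (hm : m < n) : gg A B C σ1 σ2 σ3 m < n := by
  unfold gg
  split_ifs with h1 h2 h3 h4 h5
  · have := (σ2.symm ⟨m, h1⟩).isLt; omega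
  · omega
  · have := (σ3.symm ⟨m - B - 1, h3.1⟩).isLt; omega
  · omega
  · have := (σ1.symm ⟨m - B - C - 2, h5.1⟩).isLt; omega
  · omega

lemma gg_ff (h : A + B + C + 2 = n) (σ1 : Equiv.Perm (Fin A)) (σ2 : Equiv.Perm (Fin B))
    (σ3 : Equiv.Perm (Fin C)) {m : ℕ} (hm : m < n) :
    gg A B C σ1 σ2 σ3 (ff A B C σ1 σ2 σ3 m) = m := by
  unfold ff
  split_ifs with h1 h2 h3 h4 h5
  · have hlt := (σ1 ⟨m, h1⟩).isLt
    unfold gg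
    rw [dif_neg (by omega), if_neg (by omega), dif_neg (by omega), if_neg (by omega),
      dif_pos ⟨by omega, by omega⟩]
    have : (⟨(σ1 ⟨m, h1⟩ : ℕ) + B + C + 2 - B - C - 2, by omega⟩ : Fin A) = σ1 ⟨m, h1⟩ := by
      apply Fin.ext; simp; omega
    rw [this, Equiv.symm_apply_apply]
  · subst h2
    unfold gg
    rw [dif_neg (by omega), if_pos rfl]
  · have hlt := (σ2 ⟨m - A - 1, h3.1⟩).isLt
    unfold gg
    rw [dif_pos hlt]
    have : (⟨(σ2 ⟨m - A - 1, h3.1⟩ : ℕ), hlt⟩ : Fin B) = σ2 ⟨m - A - 1, h3.1⟩ := by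
      apply Fin.ext; simp
    rw [this, Equiv.symm_apply_apply]
    simp only []
    omega
  · unfold gg
    rw [dif_neg (by omega), if_neg (by omega), dif_neg (by omega), if_pos rfl]
    omega
  · have hlt := (σ3 ⟨m - A - B - 2, h5.1⟩).isLt
    unfold gg
    rw [dif_neg (by omega), if_neg (by omega), dif_pos ⟨by omega, by omega⟩]
    have : (⟨B + 1 + (σ3 ⟨m - A - B - 2, h5.1⟩ : ℕ) - B - 1, by omega⟩ : Fin C)
        = σ3 ⟨m - A - B - 2, h5.1⟩ := by
      apply Fin.ext; simp; omega
    rw [this, Equiv.symm_apply_apply]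
    simp
    omega
  · omega

lemma ff_gg (h : A + B + C + 2 = n) (σ1 : Equiv.Perm (Fin A)) (σ2 : Equiv.Perm (Fin B))
    (σ3 : Equiv.Perm (Fin C)) {m : ℕ} (hm : m < n) :
    ff A B C σ1 σ2 σ3 (gg A B C σ1 σ2 σ3 m) = m := by
  unfold gg
  split_ifs with h1 h2 h3 h4 h5
  · have hlt := (σ2.symm ⟨m, h1⟩).isLt
    unfold ff
    rw [dif_neg (by omega), if_neg (by omega), dif_pos ⟨by omega, by omega⟩]
    have : (⟨A + 1 + (σ2.symm ⟨m, h1⟩ : ℕ) - A - 1, by omega⟩ : Fin B) = σ2.symm ⟨m, h1⟩ := by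
      apply Fin.ext; simp; omega
    rw [this, Equiv.apply_symm_apply]
  · subst h2
    unfold ff
    rw [dif_neg (by omega), if_pos rfl]
  · have hlt := (σ3.symm ⟨m - B - 1, h3.1⟩).isLt
    unfold ff
    rw [dif_neg (by omega), if_neg (by omega), dif_neg (by omega), if_neg (by omega),
      dif_pos ⟨by omega, by omega⟩]
    have : (⟨A + B + 2 + (σ3.symm ⟨m - B - 1, h3.1⟩ : ℕ) - A - B - 2, by omega⟩ : Fin C)
        = σ3.symm ⟨m - B - 1, h3.1⟩ := by
      apply Fin.ext; simp; omega
    rw [this, Equiv.apply_symm_apply]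
    simp
    omega
  · unfold ff
    rw [dif_neg (by omega), if_neg (by omega), dif_neg (by omega), if_pos rfl]
    omega
  · have hlt := (σ1.symm ⟨m - B - C - 2, h5.1⟩).isLt
    unfold ff
    rw [dif_pos hlt]
    have : (⟨(σ1.symm ⟨m - B - C - 2, h5.1⟩ : ℕ), hlt⟩ : Fin A) = σ1.symm ⟨m - B - C - 2, h5.1⟩ := by
      apply Fin.ext; simp
    rw [this, Equiv.apply_symm_apply]
    simp
    omega
  · omega

/-- the permutation built from a triple -/
def phi (h : A + B + C + 2 = n) (σ : Equiv.Perm (Fin A) × Equiv.Perm (Fin B) × Equiv.Perm (Fin C)) :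
    Equiv.Perm (Fin n) where
  toFun i := ⟨ff A B C σ.1 σ.2.1 σ.2.2 i, ff_lt h _ _ _ i.isLt⟩
  invFun i := ⟨gg A B C σ.1 σ.2.1 σ.2.2 i, gg_lt h _ _ _ i.isLt⟩
  left_inv i := Fin.ext (gg_ff h _ _ _ i.isLt)
  right_inv i := Fin.ext (ff_gg h _ _ _ i.isLt)

end Count

section Count2
variable {n A B C : ℕ}

lemma struct_phi (h : A + B + C + 2 = n)
    (σ : Equiv.Perm (Fin A) × Equiv.Perm (Fin B) × Equiv.Perm (Fin C)) :
    Struct A B C (phi h σ) := by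
  obtain ⟨σ1, σ2, σ3⟩ := σ
  refine ⟨h, fun i => ?_⟩
  have hff : ((phi h (σ1, σ2, σ3)) i : ℕ) = ff A B C σ1 σ2 σ3 i := rfl
  refine ⟨?_, ?_, ?_, ?_, ?_⟩
  · intro h1; rw [hff]; unfold ff; rw [dif_pos h1]; omega
  · intro h1; rw [hff]; unfold ff; rw [dif_neg (by omega), if_pos h1]
  · intro h1 h2; rw [hff]; unfold ff
    have hc : (i : ℕ) - A - 1 < B ∧ A < (i : ℕ) := ⟨by omega, h1⟩
    rw [dif_neg (by omega), if_neg (by omega), dif_pos hc]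
    exact (σ2 ⟨(i : ℕ) - A - 1, hc.1⟩).isLt
  · intro h1; rw [hff]; unfold ff
    rw [dif_neg (by omega), if_neg (by omega), dif_neg (by omega), if_pos h1]
  · intro h1; rw [hff]; unfold ff
    have hc : (i : ℕ) - A - B - 2 < C ∧ A + B + 1 < (i : ℕ) := ⟨by have := i.isLt; omega, h1⟩
    rw [dif_neg (by omega), if_neg (by omega), dif_neg (by omega), if_neg (by omega), dif_pos hc]
    have := (σ3 ⟨(i : ℕ) - A - B - 2, hc.1⟩).isLt
    omega

lemma phi_inj (h : A + B + C + 2 = n) : Function.Injective (phi h) := by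
  rintro ⟨σ1, σ2, σ3⟩ ⟨σ1', σ2', σ3'⟩ e
  have key : ∀ (m : ℕ) (hm : m < n), ff A B C σ1 σ2 σ3 m = ff A B C σ1' σ2' σ3' m := by
    intro m hm
    exact congrArg (fun p : Equiv.Perm (Fin n) => ((p ⟨m, hm⟩ : Fin n) : ℕ)) e
  have e1 : σ1 = σ1' := by
    apply Equiv.ext; intro x
    have hx := x.isLt
    have := key x (by omega)
    unfold ff at this
    rw [dif_pos hx, dif_pos hx, Fin.eta] at this
    exact Fin.ext (by omega)
  have e2 : σ2 = σ2' := by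
    apply Equiv.ext; intro x
    have hx := x.isLt
    have := key (A + 1 + x) (by omega)
    unfold ff at this
    have hc : A + 1 + (x : ℕ) - A - 1 < B ∧ A < A + 1 + (x : ℕ) := ⟨by omega, by omega⟩
    rw [dif_neg (by omega), if_neg (by omega), dif_pos hc, dif_neg (by omega),
      if_neg (by omega), dif_pos hc] at this
    have hxx : (⟨A + 1 + (x : ℕ) - A - 1, hc.1⟩ : Fin B) = x := Fin.ext (by simp; omega)
    rw [hxx] at this
    exact Fin.ext this
  have e3 : σ3 = σ3' := by
    apply Equiv.ext; intro x
    have hx := x.isLt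
    have := key (A + B + 2 + x) (by omega)
    unfold ff at this
    have hc : A + B + 2 + (x : ℕ) - A - B - 2 < C ∧ A + B + 1 < A + B + 2 + (x : ℕ) :=
      ⟨by omega, by omega⟩
    rw [dif_neg (by omega), if_neg (by omega), dif_neg (by omega), if_neg (by omega),
      dif_pos hc, dif_neg (by omega), if_neg (by omega), dif_neg (by omega),
      if_neg (by omega), dif_pos hc] at this
    have hxx : (⟨A + B + 2 + (x : ℕ) - A - B - 2, hc.1⟩ : Fin C) = x := Fin.ext (by simp; omega)
    rw [hxx] at this
    exact Fin.ext (by omega)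
  rw [e1, e2, e3]

lemma phi_surj (h : A + B + C + 2 = n) (π : Equiv.Perm (Fin n)) (hπ : Struct A B C π) :
    ∃ σ, phi h σ = π := by
  obtain ⟨-, hstr⟩ := hπ
  have hb1 : ∀ x : Fin A, (x : ℕ) < n := fun x => by have := x.isLt; omega
  have hb2 : ∀ x : Fin B, A + 1 + (x : ℕ) < n := fun x => by have := x.isLt; omega
  have hb3 : ∀ x : Fin C, A + B + 2 + (x : ℕ) < n := fun x => by have := x.isLt; omega
  have hv1 : ∀ x : Fin A, B + C + 1 < (π ⟨x, hb1 x⟩ : ℕ) := fun x => (hstr ⟨x, hb1 x⟩).1 x.isLt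
  have hv2 : ∀ x : Fin B, (π ⟨A + 1 + x, hb2 x⟩ : ℕ) < B := fun x =>
    (hstr ⟨A + 1 + x, hb2 x⟩).2.2.1 (by show A < A + 1 + (x : ℕ); omega)
      (by show A + 1 + (x : ℕ) < A + B + 1; have := x.isLt; omega)
  have hv3 : ∀ x : Fin C, B < (π ⟨A + B + 2 + x, hb3 x⟩ : ℕ) ∧
      (π ⟨A + B + 2 + x, hb3 x⟩ : ℕ) < B + C + 1 := fun x =>
    (hstr ⟨A + B + 2 + x, hb3 x⟩).2.2.2.2 (by show A + B + 1 < A + B + 2 + (x : ℕ); omega)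
  set t1 : Fin A → Fin A := fun x =>
    ⟨(π ⟨x, hb1 x⟩ : ℕ) - (B + C + 2), by
      have := (π ⟨x, hb1 x⟩).isLt; have := hv1 x; omega⟩ with ht1
  set t2 : Fin B → Fin B := fun x => ⟨(π ⟨A + 1 + x, hb2 x⟩ : ℕ), hv2 x⟩ with ht2
  set t3 : Fin C → Fin C := fun x =>
    ⟨(π ⟨A + B + 2 + x, hb3 x⟩ : ℕ) - (B + 1), by have := (hv3 x).1; have := (hv3 x).2; omega⟩ with ht3
  have i1 : Function.Injective t1 := by
    intro x y hxy
    rw [ht1, Fin.mk.injEq] at hxy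
    have := hv1 x; have := hv1 y
    have hpe : π ⟨x, hb1 x⟩ = π ⟨y, hb1 y⟩ := Fin.ext (by omega)
    have hmk := π.injective hpe
    rw [Fin.mk.injEq] at hmk
    exact Fin.ext (by omega)
  have i2 : Function.Injective t2 := by
    intro x y hxy
    rw [ht2, Fin.mk.injEq] at hxy
    have hpe : π ⟨A + 1 + x, hb2 x⟩ = π ⟨A + 1 + y, hb2 y⟩ := Fin.ext hxy
    have hmk := π.injective hpe
    rw [Fin.mk.injEq] at hmk
    exact Fin.ext (by omega)
  have i3 : Function.Injective t3 := by
    intro x y hxy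
    rw [ht3, Fin.mk.injEq] at hxy
    have := (hv3 x).1; have := (hv3 y).1
    have hpe : π ⟨A + B + 2 + x, hb3 x⟩ = π ⟨A + B + 2 + y, hb3 y⟩ := Fin.ext (by omega)
    have hmk := π.injective hpe
    rw [Fin.mk.injEq] at hmk
    exact Fin.ext (by omega)
  refine ⟨(Equiv.ofBijective t1 (Finite.injective_iff_bijective.mp i1),
          Equiv.ofBijective t2 (Finite.injective_iff_bijective.mp i2),
          Equiv.ofBijective t3 (Finite.injective_iff_bijective.mp i3)), ?_⟩
  apply Equiv.ext
  intro i
  apply Fin.ext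
  show ff A B C _ _ _ (i : ℕ) = (π i : ℕ)
  unfold ff
  split_ifs with h1 h2 h3 h4 h5
  · show (t1 ⟨i, h1⟩ : ℕ) + B + C + 2 = _
    rw [ht1]
    have hi : (⟨((⟨(i : ℕ), h1⟩ : Fin A) : ℕ), hb1 _⟩ : Fin n) = i := Fin.ext rfl
    simp only [hi]
    have := hv1 ⟨i, h1⟩
    rw [hi] at this
    omega
  · have := (hstr i).2.1 h2
    omega
  · show (t2 ⟨(i : ℕ) - A - 1, h3.1⟩ : ℕ) = _
    rw [ht2]
    have hi : (⟨A + 1 + ((⟨(i : ℕ) - A - 1, h3.1⟩ : Fin B) : ℕ), hb2 _⟩ : Fin n) = i :=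
      Fin.ext (by simp; omega)
    simp only [hi]
  · have := (hstr i).2.2.2.1 h4
    omega
  · show B + 1 + (t3 ⟨(i : ℕ) - A - B - 2, h5.1⟩ : ℕ) = _
    rw [ht3]
    have hi : (⟨A + B + 2 + ((⟨(i : ℕ) - A - B - 2, h5.1⟩ : Fin C) : ℕ), hb3 _⟩ : Fin n) = i :=
      Fin.ext (by simp; omega)
    simp only [hi]
    have := hv3 ⟨(i : ℕ) - A - B - 2, h5.1⟩
    rw [hi] at this
    omega
  · exfalso
    have := i.isLt
    omega

lemma card_struct (h : A + B + C + 2 = n) :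
    Nat.card {π : Equiv.Perm (Fin n) // Struct A B C π} =
      A.factorial * B.factorial * C.factorial := by
  have hbij : Function.Bijective
      (fun σ : Equiv.Perm (Fin A) × Equiv.Perm (Fin B) × Equiv.Perm (Fin C) =>
        (⟨phi h σ, struct_phi h σ⟩ : {π : Equiv.Perm (Fin n) // Struct A B C π})) := by
    constructor
    · intro σ σ' e
      exact phi_inj h (congrArg Subtype.val e)
    · rintro ⟨π, hπ⟩
      obtain ⟨σ, hσ⟩ := phi_surj h π hπ
      exact ⟨σ, Subtype.ext hσ⟩
  rw [← Nat.card_eq_of_bijective _ hbij, Nat.card_prod, Nat.card_prod]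
  simp [Nat.card_eq_fintype_card, Fintype.card_perm, Fintype.card_fin, Nat.mul_assoc]

section Uniq
variable {n : ℕ}

lemma struct_not_lt {A B C A' B' C' : ℕ} {π : Equiv.Perm (Fin n)}
    (h : Struct A B C π) (h' : Struct A' B' C' π) (hlt : B' + C' < B + C) : False := by
  obtain ⟨hs, hc⟩ := h
  obtain ⟨hs', hc'⟩ := h'
  have hAA : A < A' := by omega
  have hA'n : A' < n := by omega
  have pA : (π ⟨A, by omega⟩ : ℕ) = B := (hc ⟨A, by omega⟩).2.1 rfl
  have pA' : (π ⟨A', by omega⟩ : ℕ) = B' := (hc' ⟨A', by omega⟩).2.1 rfl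
  -- all entries before A' have value > B'+C'; in particular π⟨A⟩ = B
  have hBB : B' + C' + 1 < B := by
    have := (hc' ⟨A, by omega⟩).1 hAA
    omega
  -- position A' in the first structure
  have hA'b : A' < A + B + 1 := by
    rcases Nat.lt_trichotomy A' (A + B + 1) with hh | hh | hh
    · exact hh
    · exfalso; have := (hc ⟨A', by omega⟩).2.2.2.1 hh; omega
    · exfalso; have := ((hc ⟨A', by omega⟩).2.2.2.2 hh).1; omega
  -- position b' = A' + B' + 1
  have hb'n : A' + B' + 1 < n := by omega
  have pb' : (π ⟨A' + B' + 1, hb'n⟩ : ℕ) = B' + C' + 1 :=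
    (hc' ⟨A' + B' + 1, hb'n⟩).2.2.2.1 rfl
  have hb'b : A' + B' + 1 < A + B + 1 := by
    rcases Nat.lt_trichotomy (A' + B' + 1) A with hh | hh | hh
    · exfalso; have := (hc ⟨A' + B' + 1, hb'n⟩).1 hh; omega
    · exfalso
      have := (hc ⟨A' + B' + 1, hb'n⟩).2.1 (by show A' + B' + 1 = A; omega)
      omega
    · rcases Nat.lt_trichotomy (A' + B' + 1) (A + B + 1) with hh2 | hh2 | hh2
      · exact hh2
      · exfalso; have := (hc ⟨A' + B' + 1, hb'n⟩).2.2.2.1 hh2; omega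
      · exfalso; have := ((hc ⟨A' + B' + 1, hb'n⟩).2.2.2.2 hh2).1; omega
  -- position A+B+1 in second structure
  have hbn : A + B + 1 < n := by omega
  have pb : (π ⟨A + B + 1, hbn⟩ : ℕ) = B + C + 1 := (hc ⟨A + B + 1, hbn⟩).2.2.2.1 rfl
  have := ((hc' ⟨A + B + 1, hbn⟩).2.2.2.2 (by show A' + B' + 1 < A + B + 1; omega)).2
  omega

lemma struct_eq {A B C A' B' C' : ℕ} {π : Equiv.Perm (Fin n)}
    (h : Struct A B C π) (h' : Struct A' B' C' π) : A = A' ∧ B = B' ∧ C = C' := by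
  have hsum : B + C = B' + C' := by
    rcases Nat.lt_trichotomy (B + C) (B' + C') with hh | hh | hh
    · exact absurd (struct_not_lt h' h hh) id
    · exact hh
    · exact absurd (struct_not_lt h h' hh) id
  have hA : A = A' := by have := h.1; have := h'.1; omega
  have hB : B = B' := by
    have p1 : (π ⟨A, by have := h.1; omega⟩ : ℕ) = B := (h.2 ⟨A, by have := h.1; omega⟩).2.1 rfl
    have p2 : (π ⟨A, by have := h.1; omega⟩ : ℕ) = B' :=
      (h'.2 ⟨A, by have := h.1; omega⟩).2.1 (by show A = A'; omega)
    omega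
  exact ⟨hA, hB, by omega⟩

end Uniq

/-- For `n ≥ 1`, the number of permutations of length `n`
avoiding `(12, {(0,0),(0,1),(1,1),(1,2),(2,0),(2,2)})` equals
`n! − Σ_{k=0}^{n-2} Σ_{j=0}^{k} j!·(k-j)!·(n-2-k)!`. -/
theorem stmt16 (n : ℕ) (hn : 1 ≤ n) :
    Nat.card {π : Equiv.Perm (Fin n) //
        MeshAvoids (1 : Equiv.Perm (Fin 2)) {(0,0),(0,1),(1,1),(1,2),(2,0),(2,2)} π} =
      n.factorial -
        ∑ k ∈ Finset.range (n - 1), ∑ j ∈ Finset.range (k + 1),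
          j.factorial * (k - j).factorial * (n - 2 - k).factorial := by
  classical
  have key : ∀ π : Equiv.Perm (Fin n),
      (¬ MeshAvoids (1 : Equiv.Perm (Fin 2)) {(0,0),(0,1),(1,1),(1,2),(2,0),(2,2)} π) ↔
      ∃ B C, Struct (n - 2 - B - C) B C π := fun π =>
    (not_not).trans (occ_iff_struct π)
  have h1 : Nat.card {π : Equiv.Perm (Fin n) //
      MeshAvoids (1 : Equiv.Perm (Fin 2)) {(0,0),(0,1),(1,1),(1,2),(2,0),(2,2)} π} =
      (Finset.univ.filter fun π : Equiv.Perm (Fin n) =>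
        MeshAvoids (1 : Equiv.Perm (Fin 2)) {(0,0),(0,1),(1,1),(1,2),(2,0),(2,2)} π).card := by
    rw [Nat.card_eq_fintype_card, Fintype.card_subtype]
  have h2 : (Finset.univ.filter fun π : Equiv.Perm (Fin n) =>
        MeshAvoids (1 : Equiv.Perm (Fin 2)) {(0,0),(0,1),(1,1),(1,2),(2,0),(2,2)} π).card
      + (Finset.univ.filter fun π : Equiv.Perm (Fin n) =>
        ¬ MeshAvoids (1 : Equiv.Perm (Fin 2)) {(0,0),(0,1),(1,1),(1,2),(2,0),(2,2)} π).card
      = n.factorial := by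
    rw [Finset.card_filter_add_card_filter_not]
    simp [Fintype.card_perm]
  have h3 : (Finset.univ.filter fun π : Equiv.Perm (Fin n) =>
        ¬ MeshAvoids (1 : Equiv.Perm (Fin 2)) {(0,0),(0,1),(1,1),(1,2),(2,0),(2,2)} π).card =
      ∑ k ∈ Finset.range (n - 1), ∑ j ∈ Finset.range (k + 1),
          j.factorial * (k - j).factorial * (n - 2 - k).factorial := by
    have hunion : (Finset.univ.filter fun π : Equiv.Perm (Fin n) =>
        ¬ MeshAvoids (1 : Equiv.Perm (Fin 2)) {(0,0),(0,1),(1,1),(1,2),(2,0),(2,2)} π) =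
        ((Finset.range (n - 1)).sigma fun k => Finset.range (k + 1)).biUnion
          (fun kj => Finset.univ.filter fun π : Equiv.Perm (Fin n) =>
            Struct (n - 2 - kj.1) kj.2 (kj.1 - kj.2) π) := by
      ext π
      simp only [Finset.mem_biUnion, Finset.mem_filter, Finset.mem_univ, true_and,
        Finset.mem_sigma, Finset.mem_range]
      rw [key π]
      constructor
      · rintro ⟨B, C, hstr⟩
        have hs := hstr.1
        refine ⟨⟨B + C, B⟩, ⟨by show B + C < n - 1; omega, by show B < B + C + 1; omega⟩, ?_⟩
        show Struct (n - 2 - (B + C)) B (B + C - B) π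
        have e1 : B + C - B = C := by omega
        have e2 : n - 2 - (B + C) = n - 2 - B - C := by omega
        rw [e1, e2]
        exact hstr
      · rintro ⟨⟨k, j⟩, ⟨hk, hj⟩, hstr⟩
        have hk' : k < n - 1 := hk
        have hj' : j < k + 1 := hj
        have hstr' : Struct (n - 2 - k) j (k - j) π := hstr
        refine ⟨j, k - j, ?_⟩
        have e : n - 2 - j - (k - j) = n - 2 - k := by omega
        rw [e]
        exact hstr'
    rw [hunion, Finset.card_biUnion]
    · rw [Finset.sum_sigma]
      refine Finset.sum_congr rfl fun k hk => Finset.sum_congr rfl fun j hj => ?_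
      simp only [Finset.mem_range] at hk hj
      have hsum : (n - 2 - k) + j + (k - j) + 2 = n := by omega
      have hcs := card_struct (n := n) hsum
      rw [Nat.card_eq_fintype_card, Fintype.card_subtype] at hcs
      rw [hcs]
      ring
    · intro x hx y hy hxy
      rw [Function.onFun, Finset.disjoint_left]
      intro π hπx hπy
      simp only [Finset.mem_filter, Finset.mem_univ, true_and] at hπx hπy
      simp only [Finset.mem_coe, Finset.mem_sigma, Finset.mem_range] at hx hy
      obtain ⟨e1, e2, e3⟩ := struct_eq hπx hπy
      exact hxy (Sigma.ext (by omega) (heq_of_eq e2))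
  omega
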